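/- In the data setting, the data (U₋, X, Y₋) are informative for strong controllability (i.e., for every A ∈ 𝒜_dat, every L ∈ ℝ^{n×p} and every λ ∈ ℂ, rank [A + LC − λI, B + LD] = n) if and only if ker M ⊆ B(ker D) and rank [[R − λMX₋, MB],[CX₋, D]] = rank M + rank [CX₋, D] for all λ ∈ ℂ. The data are informative for strong stabilizability (the same with λ restricted to |λ| ≥ 1) if and only if ker M ⊆ B(ker D) and the same rank condition holds for all λ ∈ ℂ with |λ| ≥ 1. -/

import Mathlib

set_option linter.unusedSectionVars false
open Matrix Module

variable {K : Type*} [Field K]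

/-- Separation: if `v ∉ U` there is a vector `x` with `U ⬝ᵥ x = 0` but `v ⬝ᵥ x ≠ 0`. -/
lemma sep_lemma {ι : Type*} [Fintype ι] [DecidableEq ι] (U : Submodule K (ι → K)) {v : ι → K}
    (hv : v ∉ U) : ∃ x : ι → K, (∀ u ∈ U, u ⬝ᵥ x = 0) ∧ v ⬝ᵥ x ≠ 0 := by
  obtain ⟨f, hfv, hmap⟩ := U.exists_dual_map_eq_bot_of_notMem hv inferInstance
  have key : ∀ u : ι → K, f u = u ⬝ᵥ (fun j => f (fun i => if j = i then 1 else 0)) := by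
    intro u
    rw [LinearMap.pi_apply_eq_sum_univ f u]
    simp [dotProduct, smul_eq_mul]
  refine ⟨fun j => f (fun i => if j = i then 1 else 0), ?_, ?_⟩
  · intro u hu
    rw [← key]
    have : f u ∈ Submodule.map f U := Submodule.mem_map_of_mem hu
    rw [hmap] at this
    simpa using this
  · rw [← key]; exact hfv

/-- If `ξ` annihilates the kernel of `A`, then `ξ` is in the row space of `A`. -/
lemma exists_vecMul_eq {ι κ : Type*} [Fintype ι] [Fintype κ] [DecidableEq ι] [DecidableEq κ]
    (A : Matrix ι κ K) (ξ : κ → K) (h : ∀ x : κ → K, A *ᵥ x = 0 → ξ ⬝ᵥ x = 0) :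
    ∃ g : ι → K, ξ = g ᵥ* A := by
  by_contra hc
  push_neg at hc
  have hnm : ξ ∉ LinearMap.range Aᵀ.mulVecLin := by
    rintro ⟨g, hg⟩
    exact hc g (by rw [← hg, Matrix.mulVecLin_apply, Matrix.mulVec_transpose])
  obtain ⟨x, hU, hvx⟩ := sep_lemma _ hnm
  have hAx : A *ᵥ x = 0 := by
    ext i
    have := hU (Aᵀ *ᵥ Pi.single i 1) ⟨Pi.single i 1, rfl⟩
    rw [Matrix.mulVec_transpose, ← dotProduct_mulVec] at this
    simpa using this
  exact hvx (h x hAx)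

lemma exists_dual_pair {ι : Type*} [Fintype ι] [DecidableEq ι] (ξr ξi : ι → ℝ)
    (h : ∀ a b : ℝ, a • ξr + b • ξi = 0 → a = 0 ∧ b = 0) :
    ∃ u₁ u₂ : ι → ℝ, ξr ⬝ᵥ u₁ = 1 ∧ ξi ⬝ᵥ u₁ = 0 ∧ ξr ⬝ᵥ u₂ = 0 ∧ ξi ⬝ᵥ u₂ = 1 := by
  set A : Matrix (Fin 2) ι ℝ := Matrix.of ![ξr, ξi] with hA
  have hsurj : ∀ y : Fin 2 → ℝ, ∃ u, A *ᵥ u = y := by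
    intro y
    by_contra hc
    push_neg at hc
    have hnm : y ∉ LinearMap.range A.mulVecLin := by
      rintro ⟨u, hu⟩; exact hc u hu
    obtain ⟨x, hU, hyx⟩ := sep_lemma _ hnm
    have hxA : x ᵥ* A = 0 := by
      funext j
      have h2 : ∀ u : ι → ℝ, (A *ᵥ u) ⬝ᵥ x = 0 := fun u => hU _ ⟨u, rfl⟩
      have h3 := h2 (Pi.single j 1)
      rw [dotProduct_comm, dotProduct_mulVec] at h3
      simpa using h3
    have hx0 : x 0 • ξr + x 1 • ξi = 0 := by
      funext i
      have := congrFun hxA i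
      simp [vecMul, dotProduct, Fin.sum_univ_two, hA] at this
      simpa [mul_comm] using this
    obtain ⟨h0, h1⟩ := h _ _ hx0
    apply hyx
    have : x = 0 := by
      funext j; fin_cases j <;> assumption
    simp [this]
  obtain ⟨u₁, hu₁⟩ := hsurj ![1, 0]
  obtain ⟨u₂, hu₂⟩ := hsurj ![0, 1]
  have e1 := congrFun hu₁ 0
  have e2 := congrFun hu₁ 1
  have e3 := congrFun hu₂ 0
  have e4 := congrFun hu₂ 1
  simp [hA, Matrix.mulVec, Matrix.of_apply] at e1 e2 e3 e4
  exact ⟨u₁, u₂, e1, e2, e3, e4⟩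

/-- rank of a matrix with `Fin n` rows equals `n` iff the left kernel is trivial. -/
lemma rank_eq_rows_iff {n : ℕ} {c : Type*} [Fintype c] (P : Matrix (Fin n) c K) :
    P.rank = n ↔ ∀ ξ : Fin n → K, ξ ᵥ* P = 0 → ξ = 0 := by
  have hrt : P.rank = Pᵀ.rank := (Matrix.rank_transpose P).symm
  have hrn := LinearMap.finrank_range_add_finrank_ker (Pᵀ.mulVecLin)
  have hdom : finrank K (Fin n → K) = n := by simp
  rw [hdom] at hrn
  have hker : ∀ ξ : Fin n → K, Pᵀ.mulVecLin ξ = Pᵀ *ᵥ ξ := fun _ => rfl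
  constructor
  · intro hr ξ hξ
    have : Matrix.rank Pᵀ = n := by rw [← hrt, hr]
    have hk0 : finrank K (LinearMap.ker Pᵀ.mulVecLin) = 0 := by
      rw [Matrix.rank] at this; omega
    rw [Submodule.finrank_eq_zero] at hk0
    have : ξ ∈ LinearMap.ker Pᵀ.mulVecLin := by
      rw [LinearMap.mem_ker, hker, Matrix.mulVec_transpose, hξ]
    rw [hk0] at this
    simpa using this
  · intro h
    have hk : LinearMap.ker Pᵀ.mulVecLin = ⊥ := by
      ext ξ
      simp only [LinearMap.mem_ker, Submodule.mem_bot]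
      constructor
      · intro hξ
        exact h ξ (by rw [← Matrix.mulVec_transpose, ← hker, hξ])
      · intro hξ; simp [hξ]
    rw [hrt, Matrix.rank]
    rw [hk] at hrn
    simpa using hrn

lemma rank_hautus_iff {n : ℕ} {c₁ c₂ : Type*} [Fintype c₁] [Fintype c₂]
    (P₁ : Matrix (Fin n) c₁ K) (P₂ : Matrix (Fin n) c₂ K) :
    (fromCols P₁ P₂).rank = n ↔
      ∀ ξ : Fin n → K, ξ ᵥ* P₁ = 0 → ξ ᵥ* P₂ = 0 → ξ = 0 := by
  rw [rank_eq_rows_iff]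
  constructor
  · intro h ξ h1 h2
    apply h ξ
    rw [vecMul_fromCols, h1, h2]
    funext j; cases j <;> rfl
  · intro h ξ hξ
    rw [vecMul_fromCols] at hξ
    exact h ξ (funext fun j => congrFun hξ (Sum.inl j)) (funext fun j => congrFun hξ (Sum.inr j))

lemma range_mulVecLin_fromColumns {m : Type*} {c₁ c₂ : Type*} [Fintype c₁] [Fintype c₂]
    (P₁ : Matrix m c₁ K) (P₂ : Matrix m c₂ K) :
    LinearMap.range (fromCols P₁ P₂).mulVecLin
      = LinearMap.range P₁.mulVecLin ⊔ LinearMap.range P₂.mulVecLin := by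
  apply le_antisymm
  · rintro x ⟨v, rfl⟩
    have hv : v = (v ∘ Sum.inl) ⊕ᵥ (v ∘ Sum.inr) := by funext j; cases j <;> rfl
    have : (fromCols P₁ P₂).mulVecLin v = P₁ *ᵥ (v ∘ Sum.inl) + P₂ *ᵥ (v ∘ Sum.inr) := by
      rw [Matrix.mulVecLin_apply]
      conv_lhs => rw [hv]
      rw [fromCols_mulVec_sumElim]
    rw [this]
    exact Submodule.add_mem_sup ⟨_, rfl⟩ ⟨_, rfl⟩
  · apply sup_le
    · rintro x ⟨v, rfl⟩
      exact ⟨Sum.elim v 0, by rw [Matrix.mulVecLin_apply, fromCols_mulVec_sumElim]; simp⟩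
    · rintro x ⟨v, rfl⟩
      exact ⟨Sum.elim 0 v, by rw [Matrix.mulVecLin_apply, fromCols_mulVec_sumElim]; simp⟩

lemma finrank_submodule_prod {V W : Type*} [AddCommGroup V] [AddCommGroup W]
    [Module K V] [Module K W] [FiniteDimensional K V] [FiniteDimensional K W]
    (P : Submodule K V) (Q : Submodule K W) :
    finrank K (P.prod Q) = finrank K P + finrank K Q := by
  have e : (P.prod Q) ≃ₗ[K] P × Q :=
    { toFun := fun x => (⟨x.1.1, x.2.1⟩, ⟨x.1.2, x.2.2⟩)
      invFun := fun x => ⟨(x.1.1, x.2.1), ⟨x.1.2, x.2.2⟩⟩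
      map_add' := fun _ _ => rfl
      map_smul' := fun _ _ => rfl
      left_inv := fun _ => rfl
      right_inv := fun _ => rfl }
  rw [LinearEquiv.finrank_eq e, Module.finrank_prod]

lemma rank_fromRows_mul_eq_iff {k p : ℕ} {n' c : Type*} [Fintype n'] [Fintype c]
    (M' : Matrix (Fin k) n' K) (W' : Matrix n' c K) (Q : Matrix (Fin p) c K) :
    (fromRows (M' * W') Q).rank = M'.rank + Q.rank ↔
      ∀ (g : Fin k → K) (η : Fin p → K), g ᵥ* (M' * W') = η ᵥ* Q → g ᵥ* M' = 0 := by
  set A := M' * W' with hA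
  let ψ : ((Fin k → K) × (Fin p → K)) →ₗ[K] (c → K) :=
    (Aᵀ.mulVecLin.comp (LinearMap.fst K _ _)) - (Qᵀ.mulVecLin.comp (LinearMap.snd K _ _))
  have hψ : ∀ (g : Fin k → K) (η : Fin p → K), ψ (g, η) = Aᵀ *ᵥ g - Qᵀ *ᵥ η := fun _ _ => rfl
  have hrange : LinearMap.range ψ
      = LinearMap.range Aᵀ.mulVecLin ⊔ LinearMap.range Qᵀ.mulVecLin := by
    apply le_antisymm
    · rintro x ⟨⟨g, η⟩, rfl⟩
      rw [hψ]
      exact Submodule.sub_mem _ (Submodule.mem_sup_left ⟨g, rfl⟩)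
        (Submodule.mem_sup_right ⟨η, rfl⟩)
    · apply sup_le
      · rintro x ⟨g, rfl⟩
        exact ⟨(g, 0), by rw [hψ]; simp [Matrix.mulVecLin_apply, Matrix.mulVec_transpose]⟩
      · rintro x ⟨η, rfl⟩
        exact ⟨(0, -η), by rw [hψ]; simp [Matrix.mulVecLin_apply, Matrix.mulVec_transpose,
          Matrix.mulVec_neg]⟩
  have hrn : finrank K (LinearMap.range ψ) + finrank K (LinearMap.ker ψ) = k + p := by
    have := LinearMap.finrank_range_add_finrank_ker ψ
    simpa [Module.finrank_prod] using this
  have hM : M'.rank + finrank K (LinearMap.ker M'ᵀ.mulVecLin) = k := by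
    have h1 := LinearMap.finrank_range_add_finrank_ker M'ᵀ.mulVecLin
    rw [← Matrix.rank_transpose M']
    rw [Matrix.rank]
    simpa using h1
  have hQ : Q.rank + finrank K (LinearMap.ker Qᵀ.mulVecLin) = p := by
    have h1 := LinearMap.finrank_range_add_finrank_ker Qᵀ.mulVecLin
    rw [← Matrix.rank_transpose Q, Matrix.rank]
    simpa using h1
  have hfr : (fromRows A Q).rank = finrank K (LinearMap.range ψ) := by
    rw [← Matrix.rank_transpose, transpose_fromRows, Matrix.rank,
      range_mulVecLin_fromColumns, hrange]
  set P := (LinearMap.ker M'ᵀ.mulVecLin).prod (LinearMap.ker Qᵀ.mulVecLin) with hPdef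
  have hple : P ≤ LinearMap.ker ψ := by
    rintro ⟨g, η⟩ hgη
    obtain ⟨h1, h2⟩ := hgη
    rw [LinearMap.mem_ker, hψ]
    have h1' : M'ᵀ *ᵥ g = 0 := h1
    have h2' : Qᵀ *ᵥ η = 0 := h2
    rw [h2', hA, Matrix.transpose_mul, ← Matrix.mulVec_mulVec, h1']
    simp
  have hPfr : finrank K P = finrank K (LinearMap.ker M'ᵀ.mulVecLin)
      + finrank K (LinearMap.ker Qᵀ.mulVecLin) := finrank_submodule_prod _ _
  constructor
  · intro h g η hgη
    rw [hfr] at h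
    have hkk : finrank K P = finrank K (LinearMap.ker ψ) := by omega
    have hPk : P = LinearMap.ker ψ :=
      Submodule.eq_of_le_of_finrank_le hple (le_of_eq hkk.symm)
    have hmem : (g, η) ∈ LinearMap.ker ψ := by
      rw [LinearMap.mem_ker, hψ, sub_eq_zero, Matrix.mulVec_transpose, Matrix.mulVec_transpose]
      exact hgη
    rw [← hPk] at hmem
    have h1 : M'ᵀ *ᵥ g = 0 := hmem.1
    rwa [Matrix.mulVec_transpose] at h1
  · intro hC
    have hker : LinearMap.ker ψ = P := by
      apply le_antisymm _ hple
      rintro ⟨g, η⟩ hm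
      rw [LinearMap.mem_ker, hψ, sub_eq_zero, Matrix.mulVec_transpose,
        Matrix.mulVec_transpose] at hm
      have hgM : g ᵥ* M' = 0 := hC g η hm
      have hηQ : η ᵥ* Q = 0 := by
        rw [← hm, hA, ← Matrix.vecMul_vecMul, hgM]
        simp
      constructor
      · show M'ᵀ *ᵥ g = 0
        rw [Matrix.mulVec_transpose]; exact hgM
      · show Qᵀ *ᵥ η = 0
        rw [Matrix.mulVec_transpose]; exact hηQ
    rw [hfr]
    rw [hker] at hrn
    omega

/-- complexification of a real vector -/
noncomputable def cvec {ι : Type*} (v : ι → ℝ) : ι → ℂ := fun i => (v i : ℂ)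

def vre {ι : Type*} (v : ι → ℂ) : ι → ℝ := fun i => (v i).re

def vim {ι : Type*} (v : ι → ℂ) : ι → ℝ := fun i => (v i).im

lemma cvec_eq_zero_iff {ι : Type*} {v : ι → ℝ} : cvec v = 0 ↔ v = 0 := by
  constructor
  · intro h; funext i
    have := congrFun h i
    simpa [cvec] using this
  · intro h; funext i; simp [h, cvec]

lemma vec_decomp {ι : Type*} (x : ι → ℂ) :
    x = cvec (vre x) + Complex.I • cvec (vim x) := by
  funext i
  simp only [Pi.add_apply, Pi.smul_apply, cvec, vre, vim, smul_eq_mul]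
  rw [mul_comm]
  exact (Complex.re_add_im (x i)).symm

/-- span of complexified family -/
lemma cvec_mem_span {ι κ : Type*} (v : κ → (ι → ℝ)) {x : ι → ℝ}
    (hx : x ∈ Submodule.span ℝ (Set.range v)) :
    cvec x ∈ Submodule.span ℂ (Set.range (fun j => cvec (v j))) := by
  induction hx using Submodule.span_induction with
  | mem y hy =>
      obtain ⟨j, rfl⟩ := hy
      exact Submodule.subset_span ⟨j, rfl⟩
  | zero =>
      have : cvec (0 : ι → ℝ) = 0 := by funext i; simp [cvec]
      rw [this]; exact Submodule.zero_mem _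
  | add y z _ _ hy hz =>
      have : cvec (y + z) = cvec y + cvec z := by funext i; simp [cvec]
      rw [this]; exact Submodule.add_mem _ hy hz
  | smul a y _ hy =>
      have : cvec (a • y) = (a : ℂ) • cvec y := by
        funext i; simp [cvec]
      rw [this]; exact Submodule.smul_mem _ _ hy

lemma linearIndependent_cvec {ι κ : Type*} [Fintype κ] {v : κ → (ι → ℝ)}
    (hv : LinearIndependent ℝ v) : LinearIndependent ℂ (fun j => cvec (v j)) := by
  rw [Fintype.linearIndependent_iff]
  intro c hc j
  have hre : ∑ i, (fun j => (c j).re) i • v i = 0 := by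
    funext t
    have := congrFun hc t
    simp only [Finset.sum_apply, Pi.smul_apply, smul_eq_mul, cvec, Pi.zero_apply] at this ⊢
    have := congrArg Complex.re this
    simpa [Complex.mul_re] using this
  have him : ∑ i, (fun j => (c j).im) i • v i = 0 := by
    funext t
    have := congrFun hc t
    simp only [Finset.sum_apply, Pi.smul_apply, smul_eq_mul, cvec, Pi.zero_apply] at this ⊢
    have := congrArg Complex.im this
    simpa [Complex.mul_im] using this
  have h1 := (Fintype.linearIndependent_iff.mp hv) _ hre j
  have h2 := (Fintype.linearIndependent_iff.mp hv) _ him j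
  exact Complex.ext h1 h2

lemma finrank_span_cvec {ι κ : Type*} [Fintype ι] [Fintype κ] (v : κ → (ι → ℝ)) :
    finrank ℂ (Submodule.span ℂ (Set.range (fun j => cvec (v j))))
      = finrank ℝ (Submodule.span ℝ (Set.range v)) := by
  set S := Submodule.span ℝ (Set.range v) with hS
  set r := finrank ℝ S with hr
  have b := Module.finBasis ℝ S
  rw [← hr] at b
  apply le_antisymm
  · -- complex span contained in span of the r complexified basis vectors
    have hsub : Submodule.span ℂ (Set.range (fun j => cvec (v j)))
        ≤ Submodule.span ℂ (Set.range (fun j : Fin r => cvec ((b j : ι → ℝ)))) := by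
      apply Submodule.span_le.2
      rintro _ ⟨j, rfl⟩
      simp only [SetLike.mem_coe]
      show cvec (v j) ∈ _
      have hvj : v j ∈ S := Submodule.subset_span ⟨j, rfl⟩
      have hrepr := b.sum_repr ⟨v j, hvj⟩
      have hval : v j = ∑ i, (b.repr ⟨v j, hvj⟩ i) • ((b i : ι → ℝ)) := by
        have := congrArg (Subtype.val) hrepr
        simp only [Submodule.coe_sum, Submodule.coe_smul] at this
        exact this.symm
      have : cvec (v j) = ∑ i, ((b.repr ⟨v j, hvj⟩ i : ℝ) : ℂ) • cvec ((b i : ι → ℝ)) := by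
        funext t
        have hvt := congrFun hval t
        simp only [Finset.sum_apply, Pi.smul_apply, smul_eq_mul] at hvt ⊢
        simp only [cvec]
        rw [hvt]
        push_cast
        rfl
      rw [this]
      exact Submodule.sum_mem _ fun i _ =>
        Submodule.smul_mem _ _ (Submodule.subset_span ⟨i, rfl⟩)
    calc finrank ℂ (Submodule.span ℂ (Set.range (fun j => cvec (v j))))
        ≤ finrank ℂ (Submodule.span ℂ (Set.range (fun j : Fin r => cvec ((b j : ι → ℝ))))) :=
          Submodule.finrank_mono hsub
      _ ≤ r := by
          refine le_trans (finrank_span_le_card _) ?_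
          rw [Set.toFinset_range]
          exact le_trans (Finset.card_image_le) (by simp)
  · -- the r complexified basis vectors are independent inside the complex span
    have hbi : LinearIndependent ℝ (fun j : Fin r => ((b j : ι → ℝ))) :=
      b.linearIndependent.map' S.subtype (Submodule.ker_subtype S)
    have hci : LinearIndependent ℂ (fun j : Fin r => cvec ((b j : ι → ℝ))) :=
      linearIndependent_cvec hbi
    have hmem : ∀ j : Fin r, cvec ((b j : ι → ℝ))
        ∈ Submodule.span ℂ (Set.range (fun j => cvec (v j))) := by
      intro j
      exact cvec_mem_span v (b j).2
    set W := Submodule.span ℂ (Set.range (fun j => cvec (v j))) with hW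
    have hci' : LinearIndependent ℂ (fun j : Fin r => (⟨cvec ((b j : ι → ℝ)), hmem j⟩ : W)) := by
      apply LinearIndependent.of_comp W.subtype
      exact hci
    simpa using hci'.fintype_card_le_finrank

lemma rank_map_complex {ι κ : Type*} [Fintype ι] [Fintype κ] (A : Matrix ι κ ℝ) :
    (A.map (algebraMap ℝ ℂ)).rank = A.rank := by
  rw [Matrix.rank, Matrix.rank, Matrix.range_mulVecLin, Matrix.range_mulVecLin]
  have h1 : (A.map (algebraMap ℝ ℂ))ᵀ = fun j => cvec (Aᵀ j) := by
    funext j i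
    simp [Matrix.transpose_apply, Matrix.map_apply, cvec]
  rw [show (A.map (algebraMap ℝ ℂ)).col = fun j => cvec (Aᵀ j) from h1]
  have h2 : Set.range (fun j => cvec (Aᵀ j)) = Set.range (fun j => cvec ((fun j' => Aᵀ j') j)) := rfl
  exact finrank_span_cvec (fun j => Aᵀ j)

section cxlemmas

variable {ι κ c : Type*} [Fintype ι] [Fintype κ]

/-- shorthand for complexification by entry-wise coercion -/
noncomputable abbrev cxm (A : Matrix ι κ ℝ) : Matrix ι κ ℂ := A.map (algebraMap ℝ ℂ)

lemma vecMul_smul_right (x : ι → ℂ) (a : ℂ) (A : Matrix ι κ ℂ) :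
    x ᵥ* (a • A) = a • (x ᵥ* A) := by
  funext j
  simp [vecMul, dotProduct, Finset.mul_sum, Matrix.smul_apply]
  congr 1; funext i; ring

lemma vecMul_cvec (x : ι → ℝ) (A : Matrix ι κ ℝ) :
    cvec x ᵥ* cxm A = cvec (x ᵥ* A) := by
  funext j
  simp [vecMul, dotProduct, cvec, Matrix.map_apply]

lemma mulVec_cvec (A : Matrix ι κ ℝ) (x : κ → ℝ) :
    cxm A *ᵥ cvec x = cvec (A *ᵥ x) := by
  funext i
  simp [mulVec, dotProduct, cvec, Matrix.map_apply]

lemma vecMul_decomp (x : ι → ℂ) (A : Matrix ι κ ℝ) :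
    x ᵥ* cxm A = cvec (vre x ᵥ* A) + Complex.I • cvec (vim x ᵥ* A) := by
  conv_lhs => rw [vec_decomp x]
  rw [Matrix.add_vecMul, Matrix.smul_vecMul, vecMul_cvec, vecMul_cvec]

lemma mulVec_decomp (A : Matrix ι κ ℝ) (x : κ → ℂ) :
    cxm A *ᵥ x = cvec (A *ᵥ vre x) + Complex.I • cvec (A *ᵥ vim x) := by
  conv_lhs => rw [vec_decomp x]
  rw [Matrix.mulVec_add, Matrix.mulVec_smul, mulVec_cvec, mulVec_cvec]

lemma cvec_pair_inj {a b a' b' : ι → ℝ}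
    (h : cvec a + Complex.I • cvec b = cvec a' + Complex.I • cvec b') : a = a' ∧ b = b' := by
  have h' : ∀ i, (a i : ℂ) + Complex.I * b i = (a' i : ℂ) + Complex.I * b' i := by
    intro i
    have := congrFun h i
    simpa [cvec] using this
  constructor
  · funext i
    have := congrArg Complex.re (h' i); simpa using this
  · funext i
    have := congrArg Complex.im (h' i); simpa using this

lemma smul_cvec_decomp (lam : ℂ) (y : ι → ℝ) :
    lam • cvec y = cvec (lam.re • y) + Complex.I • cvec (lam.im • y) := by
  funext i
  simp only [Pi.smul_apply, cvec, Pi.add_apply, smul_eq_mul]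
  rw [Complex.ext_iff]
  simp [Complex.mul_re, Complex.mul_im]

lemma cvec_smul (a : ℝ) (y : ι → ℝ) : cvec (a • y) = (a : ℂ) • cvec y := by
  funext i; simp [cvec]

lemma cvec_add (a b : ι → ℝ) : cvec (a + b) = cvec a + cvec b := by
  funext i; simp [cvec]

lemma cvec_sub (a b : ι → ℝ) : cvec (a - b) = cvec a - cvec b := by
  funext i; simp [cvec]

lemma cvec_neg (a : ι → ℝ) : cvec (-a) = -cvec a := by
  funext i; simp [cvec]

lemma cvec_zero : cvec (0 : ι → ℝ) = 0 := by funext i; simp [cvec]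

lemma cvec_dotProduct (a b : ι → ℝ) : cvec a ⬝ᵥ cvec b = ((a ⬝ᵥ b : ℝ) : ℂ) := by
  simp [dotProduct, cvec]

lemma cxm_mul {κ' : Type*} [Fintype κ] (A : Matrix ι κ ℝ) (B : Matrix κ κ' ℝ) :
    cxm (A * B) = cxm A * cxm B := by
  exact Matrix.map_mul

lemma cxm_add (A B : Matrix ι κ ℝ) : cxm (A + B) = cxm A + cxm B := by
  funext i j; simp [Matrix.map_apply]

lemma cxm_one [DecidableEq ι] : cxm (1 : Matrix ι ι ℝ) = 1 := by
  funext i j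
  by_cases h : i = j <;> simp [Matrix.map_apply, Matrix.one_apply, h]

end cxlemmas

section vmv

variable {ι κ c : Type*} [Fintype ι] [Fintype κ] {α : Type*} [CommRing α]

lemma vecMulVec_mul_right [Fintype κ] (u : ι → α) (d : κ → α) (X : Matrix κ c α) :
    vecMulVec u d * X = vecMulVec u (d ᵥ* X) := by
  funext i t
  simp [vecMulVec, Matrix.mul_apply, vecMul, dotProduct, Finset.mul_sum, mul_assoc]

lemma mul_vecMulVec_left {c' : Type*} [Fintype ι] (Mx : Matrix c' ι α) (u : ι → α) (d : κ → α) :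
    Mx * vecMulVec u d = vecMulVec (Mx *ᵥ u) d := by
  funext i t
  simp [vecMulVec, Matrix.mul_apply, mulVec, dotProduct, Finset.sum_mul, mul_assoc]

lemma vecMul_vecMulVec (ξ : ι → α) (u : ι → α) (d : κ → α) :
    ξ ᵥ* vecMulVec u d = (ξ ⬝ᵥ u) • d := by
  funext j
  simp [vecMulVec, vecMul, dotProduct, Finset.sum_mul, mul_assoc]

lemma cxm_vecMulVec (u : ι → ℝ) (d : κ → ℝ) :
    cxm (vecMulVec u d) = vecMulVec (cvec u) (cvec d) := by
  funext i j
  simp [vecMulVec, Matrix.map_apply, cvec]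

lemma vecMulVec_zero_left (d : κ → α) : vecMulVec (0 : ι → α) d = 0 := by
  funext i j; simp [vecMulVec]

end vmv

/-- Complexification of a real matrix. -/
noncomputable def cx {a b : ℕ} (M : Matrix (Fin a) (Fin b) ℝ) : Matrix (Fin a) (Fin b) ℂ :=
  M.map (algebraMap ℝ ℂ)

/-- First T columns of the state data matrix X. -/
def Xminus {n T : ℕ} (X : Matrix (Fin n) (Fin (T + 1)) ℝ) : Matrix (Fin n) (Fin T) ℝ :=
  Matrix.of fun i t => X i t.castSucc

/-- Last T columns of the state data matrix X. -/
def Xplus {n T : ℕ} (X : Matrix (Fin n) (Fin (T + 1)) ℝ) : Matrix (Fin n) (Fin T) ℝ :=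
  Matrix.of fun i t => X i t.succ

/-- The set of state matrices A consistent with the noisy data (U₋, X, Y₋). -/
def Adat {n m p q T : ℕ} (B : Matrix (Fin n) (Fin m) ℝ) (C : Matrix (Fin p) (Fin n) ℝ)
    (D : Matrix (Fin p) (Fin m) ℝ) (E : Matrix (Fin n) (Fin q) ℝ)
    (F : Matrix (Fin p) (Fin q) ℝ) (U : Matrix (Fin m) (Fin T) ℝ)
    (X : Matrix (Fin n) (Fin (T + 1)) ℝ) (Y : Matrix (Fin p) (Fin T) ℝ) :
    Set (Matrix (Fin n) (Fin n) ℝ) :=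
  {A | ∃ W : Matrix (Fin q) (Fin T) ℝ,
    Xplus X = A * Xminus X + B * U + E * W ∧ Y = C * Xminus X + D * U + F * W}

lemma cx_eq_cxm {a b : ℕ} (A : Matrix (Fin a) (Fin b) ℝ) : cx A = cxm A := rfl

lemma fromRows_fromColumns_eq_fromBlocks {R' : Type*} {m₁ m₂ n₁ n₂ : Type*}
    (a : Matrix m₁ n₁ R') (b : Matrix m₁ n₂ R') (c : Matrix m₂ n₁ R') (d : Matrix m₂ n₂ R') :
    fromRows (fromCols a b) (fromCols c d) = fromBlocks a b c d := by
  ext (i | i) (j | j) <;> rfl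

lemma cxm_fromColumns {m' c₁ c₂ : Type*} [Fintype m'] [Fintype c₁] [Fintype c₂]
    (P : Matrix m' c₁ ℝ) (Q : Matrix m' c₂ ℝ) :
    cxm (fromCols P Q) = fromCols (cxm P) (cxm Q) := by
  ext i (j | j) <;> rfl

lemma elim_eq_elim_iff {c₁ c₂ γ : Type*} (f f' : c₁ → γ) (g g' : c₂ → γ) :
    (f ⊕ᵥ g) = (f' ⊕ᵥ g') ↔ f = f' ∧ g = g' := by
  constructor
  · intro h
    exact ⟨funext fun j => congrFun h (Sum.inl j), funext fun j => congrFun h (Sum.inr j)⟩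
  · rintro ⟨rfl, rfl⟩; rfl

section adat

variable {n m p q T k : ℕ}
variable (B : Matrix (Fin n) (Fin m) ℝ) (C : Matrix (Fin p) (Fin n) ℝ)
    (D : Matrix (Fin p) (Fin m) ℝ) (E : Matrix (Fin n) (Fin q) ℝ)
    (F : Matrix (Fin p) (Fin q) ℝ)
    (U : Matrix (Fin m) (Fin T) ℝ) (X : Matrix (Fin n) (Fin (T + 1)) ℝ)
    (Y : Matrix (Fin p) (Fin T) ℝ)
    (M : Matrix (Fin k) (Fin n) ℝ) (N : Matrix (Fin k) (Fin p) ℝ)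
    (R : Matrix (Fin k) (Fin T) ℝ)

lemma mem_Adat_iff
    (hMN : LinearMap.ker (fromCols M N).mulVecLin
      = LinearMap.range (fromRows E F).mulVecLin)
    (hR : R = M * (Xplus X - B * U) + N * (Y - C * Xminus X - D * U))
    (A : Matrix (Fin n) (Fin n) ℝ) :
    A ∈ Adat B C D E F U X Y ↔ M * A * Xminus X = R := by
  have hMENF : M * E + N * F = 0 := by
    have h0 : fromCols M N * fromRows E F = M * E + N * F :=
      fromCols_mul_fromRows M N E F
    have h1 : ∀ w : Fin q → ℝ, (M * E + N * F) *ᵥ w = 0 := by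
      intro w
      have hw : (fromRows E F).mulVecLin w ∈ LinearMap.range (fromRows E F).mulVecLin :=
        ⟨w, rfl⟩
      rw [← hMN, LinearMap.mem_ker] at hw
      rw [← h0, ← Matrix.mulVec_mulVec]
      exact hw
    funext i j
    have := congrFun (h1 (Pi.single j 1)) i
    simpa [Matrix.mulVec_single] using this
  constructor
  · rintro ⟨W, h1, h2⟩
    have e1 : Xplus X - B * U = A * Xminus X + E * W := by rw [h1]; abel
    have e2 : Y - C * Xminus X - D * U = F * W := by rw [h2]; abel
    rw [hR, e1, e2]
    have : M * (A * Xminus X + E * W) + N * (F * W)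
        = M * A * Xminus X + (M * E + N * F) * W := by
      rw [Matrix.mul_add, Matrix.add_mul, Matrix.mul_assoc, Matrix.mul_assoc, Matrix.mul_assoc]
      abel
    rw [this, hMENF, Matrix.zero_mul, add_zero]
  · intro hMAX
    set Z₁ := Xplus X - A * Xminus X - B * U with hZ₁
    set Z₂ := Y - C * Xminus X - D * U with hZ₂
    have hz : M * Z₁ + N * Z₂ = 0 := by
      have e : M * Z₁ + N * Z₂ = R - M * A * Xminus X := by
        rw [hR, hZ₁, hZ₂]
        simp only [Matrix.mul_sub, Matrix.mul_assoc]
        abel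
      rw [e, hMAX, sub_self]
    have hex : ∀ t : Fin T, ∃ w : Fin q → ℝ,
        E *ᵥ w = (fun i => Z₁ i t) ∧ F *ᵥ w = (fun i => Z₂ i t) := by
      intro t
      have hcol : (fromCols M N).mulVecLin
          ((fun i => Z₁ i t) ⊕ᵥ (fun i => Z₂ i t)) = 0 := by
        rw [Matrix.mulVecLin_apply, fromCols_mulVec_sumElim]
        funext i
        have := congrFun (congrFun hz i) t
        simpa [Matrix.mul_apply, Matrix.mulVec, dotProduct] using this
      have hker : ((fun i => Z₁ i t) ⊕ᵥ (fun i => Z₂ i t))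
          ∈ LinearMap.ker (fromCols M N).mulVecLin := hcol
      rw [hMN] at hker
      obtain ⟨w, hw⟩ := hker
      rw [Matrix.mulVecLin_apply, fromRows_mulVec] at hw
      rw [elim_eq_elim_iff] at hw
      exact ⟨w, hw.1, hw.2⟩
    choose w hw1 hw2 using hex
    refine ⟨Matrix.of fun i t => w t i, ?_, ?_⟩
    · funext i t
      have := congrFun (hw1 t) i
      simp only [Matrix.mulVec, dotProduct] at this
      have hE : (E * Matrix.of fun i t => w t i) i t = Z₁ i t := by
        rw [Matrix.mul_apply]; exact this
      have hz1 := hZ₁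
      simp only [Matrix.add_apply]
      rw [hE]
      simp [hZ₁, Matrix.sub_apply]
    · funext i t
      have := congrFun (hw2 t) i
      simp only [Matrix.mulVec, dotProduct] at this
      have hF : (F * Matrix.of fun i t => w t i) i t = Z₂ i t := by
        rw [Matrix.mul_apply]; exact this
      simp only [Matrix.add_apply]
      rw [hF]
      simp [hZ₂, Matrix.sub_apply]

end adat

lemma vecMulVec_zero_right {ι κ : Type*} {α : Type*} [CommRing α] (u : ι → α) :
    vecMulVec u (0 : κ → α) = 0 := by
  funext i j; simp [vecMulVec]

lemma cxm_neg {ι κ : Type*} (A : Matrix ι κ ℝ) : cxm (-A) = -cxm A := by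
  funext i j; simp [Matrix.map_apply]

section master

variable {n m p q T k : ℕ}
variable (B : Matrix (Fin n) (Fin m) ℝ) (C : Matrix (Fin p) (Fin n) ℝ)
    (D : Matrix (Fin p) (Fin m) ℝ) (E : Matrix (Fin n) (Fin q) ℝ)
    (F : Matrix (Fin p) (Fin q) ℝ)
    (U : Matrix (Fin m) (Fin T) ℝ) (X : Matrix (Fin n) (Fin (T + 1)) ℝ)
    (Y : Matrix (Fin p) (Fin T) ℝ)
    (M : Matrix (Fin k) (Fin n) ℝ) (N : Matrix (Fin k) (Fin p) ℝ)
    (R : Matrix (Fin k) (Fin T) ℝ)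

lemma master_lemma
    (hAdat : (Adat B C D E F U X Y).Nonempty)
    (hMN : LinearMap.ker (fromCols M N).mulVecLin
      = LinearMap.range (fromRows E F).mulVecLin)
    (hR : R = M * (Xplus X - B * U) + N * (Y - C * Xminus X - D * U))
    (S : Set ℂ) (h2S : (2 : ℂ) ∈ S) :
    ((∀ A ∈ Adat B C D E F U X Y, ∀ L : Matrix (Fin n) (Fin p) ℝ, ∀ lam ∈ S,
        (fromCols (cx (A + L * C) - lam • 1) (cx (B + L * D))).rank = n) ↔
      (LinearMap.ker M.mulVecLin
          ≤ Submodule.map B.mulVecLin (LinearMap.ker D.mulVecLin) ∧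
        ∀ lam ∈ S,
          (fromBlocks (cx R - lam • (cx M * cx (Xminus X))) (cx M * cx B)
              (cx C * cx (Xminus X)) (cx D)).rank
            = M.rank + (fromCols (C * Xminus X) D).rank)) := by
  set Xm := Xminus X with hXm
  have memA := mem_Adat_iff B C D E F U X Y M N R hMN hR
  simp only [← hXm] at memA
  obtain ⟨A₀, hA₀mem⟩ := hAdat
  have hA₀ : M * A₀ * Xm = R := (memA A₀).mp hA₀mem
  -- Hautus test reformulation
  have hautus : ∀ (A : Matrix (Fin n) (Fin n) ℝ) (L : Matrix (Fin n) (Fin p) ℝ) (lam : ℂ),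
      ((fromCols (cx (A + L * C) - lam • 1) (cx (B + L * D))).rank = n ↔
      (∀ ξ : Fin n → ℂ, ξ ᵥ* (cxm A + cxm L * cxm C) = lam • ξ →
        ξ ᵥ* (cxm B + cxm L * cxm D) = 0 → ξ = 0)) := by
    intro A L lam
    rw [rank_hautus_iff]
    apply forall_congr'
    intro ξ
    have e1 : ξ ᵥ* (cx (A + L * C) - lam • 1)
        = ξ ᵥ* (cxm A + cxm L * cxm C) - lam • ξ := by
      rw [Matrix.vecMul_sub, vecMul_smul_right, Matrix.vecMul_one, cx_eq_cxm, cxm_add, cxm_mul]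
    have e2 : cx (B + L * D) = cxm B + cxm L * cxm D := by
      rw [cx_eq_cxm, cxm_add, cxm_mul]
    rw [e1, e2, sub_eq_zero]
  -- bridge: block matrix as a product form
  have hblock : ∀ (A : Matrix (Fin n) (Fin n) ℝ), M * A * Xm = R → ∀ lam : ℂ,
      (fromBlocks (cx R - lam • (cx M * cx Xm)) (cx M * cx B) (cx C * cx Xm) (cx D))
      = fromRows (cxm M * (fromCols (cxm A * cxm Xm - lam • cxm Xm) (cxm B)))
          (fromCols (cxm (C * Xm)) (cxm D)) := by
    intro A hA lam
    have hT1 : cx R - lam • (cx M * cx Xm)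
        = cxm M * (cxm A * cxm Xm - lam • cxm Xm) := by
      have hRc : cxm R = cxm M * cxm A * cxm Xm := by
        rw [← cxm_mul, ← cxm_mul]
        exact congrArg cxm hA.symm
      rw [Matrix.mul_sub, Matrix.mul_smul, ← Matrix.mul_assoc, cx_eq_cxm, cx_eq_cxm, cx_eq_cxm,
        hRc]
    have hT3 : cx C * cx Xm = cxm (C * Xm) := (cxm_mul C Xm).symm
    rw [hT1, hT3, mul_fromCols, fromRows_fromColumns_eq_fromBlocks]
    rfl
  -- bridge: the rank condition in left-kernel form
  have hrank_iff : ∀ (A : Matrix (Fin n) (Fin n) ℝ), M * A * Xm = R → ∀ lam : ℂ,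
      (((fromBlocks (cx R - lam • (cx M * cx Xm)) (cx M * cx B) (cx C * cx Xm) (cx D)).rank
        = M.rank + (fromCols (C * Xm) D).rank) ↔
      (∀ (g : Fin k → ℂ) (η : Fin p → ℂ),
        g ᵥ* (cxm M * fromCols (cxm A * cxm Xm - lam • cxm Xm) (cxm B))
          = η ᵥ* fromCols (cxm (C * Xm)) (cxm D) → g ᵥ* cxm M = 0)) := by
    intro A hA lam
    have hq : ((C * Xm).fromCols D).rank = (fromCols (cxm (C * Xm)) (cxm D)).rank := by
      rw [← cxm_fromColumns]
      exact (rank_map_complex _).symm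
    rw [hblock A hA lam, ← rank_map_complex M, hq]
    exact rank_fromRows_mul_eq_iff (cxm M) _ _
  constructor
  · -- informativity implies the two conditions
    intro hinf
    constructor
    · -- ker M ⊆ B (ker D)
      by_contra hns
      rw [SetLike.le_def] at hns
      push_neg at hns
      obtain ⟨v, hv1, hv2⟩ := hns
      obtain ⟨ξ, hξU, hξv⟩ := sep_lemma (Submodule.map B.mulVecLin (LinearMap.ker D.mulVecLin)) hv2
      have hξv' : ξ ⬝ᵥ v ≠ 0 := by rwa [dotProduct_comm] at hξv
      obtain ⟨η, hη⟩ : ∃ η : Fin p → ℝ, ξ ᵥ* B = η ᵥ* D := by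
        apply exists_vecMul_eq D (ξ ᵥ* B)
        intro x hx
        have hBx : B *ᵥ x ∈ Submodule.map B.mulVecLin (LinearMap.ker D.mulVecLin) :=
          ⟨x, hx, rfl⟩
        have h0 := hξU _ hBx
        rw [← dotProduct_mulVec, dotProduct_comm]
        exact h0
      set c := ξ ⬝ᵥ v with hc
      set w := c⁻¹ • ((2:ℝ) • ξ + η ᵥ* C - ξ ᵥ* A₀) with hw
      set A' := A₀ + vecMulVec v w with hA'
      have hA'mem : A' ∈ Adat B C D E F U X Y := by
        rw [memA, hA', Matrix.mul_add, Matrix.add_mul]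
        have hMv : M *ᵥ v = 0 := hv1
        rw [mul_vecMulVec_left, hMv, vecMulVec_zero_left, Matrix.zero_mul, add_zero]
        exact hA₀
      have hξ0 : ξ ≠ 0 := by
        intro h0
        apply hξv'
        rw [hc, h0]
        simp
      have hξξ : ξ ⬝ᵥ ξ ≠ 0 := fun h => hξ0 (dotProduct_self_eq_zero.mp h)
      set L : Matrix (Fin n) (Fin p) ℝ := vecMulVec ((-(ξ ⬝ᵥ ξ)⁻¹) • ξ) η with hL
      have hξL : ξ ᵥ* L = -η := by
        rw [hL, _root_.vecMul_vecMulVec, dotProduct_smul, smul_eq_mul, neg_mul,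
          inv_mul_cancel₀ hξξ]
        simp
      have h1 : ξ ᵥ* (A' + L * C) = (2:ℝ) • ξ := by
        rw [Matrix.vecMul_add, hA', Matrix.vecMul_add, _root_.vecMul_vecMulVec, ← hc, hw,
          ← Matrix.vecMul_vecMul, hξL, Matrix.neg_vecMul, smul_smul]
        rw [mul_inv_cancel₀ hξv', one_smul]
        abel
      have h2 : ξ ᵥ* (B + L * D) = 0 := by
        rw [Matrix.vecMul_add, hη, ← Matrix.vecMul_vecMul, hξL, Matrix.neg_vecMul]
        abel
      have hrnk := hinf A' hA'mem L 2 h2S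
      rw [hautus] at hrnk
      have hc1 : cvec ξ ᵥ* (cxm A' + cxm L * cxm C) = (2:ℂ) • cvec ξ := by
        rw [← cxm_mul, ← cxm_add, vecMul_cvec, h1, cvec_smul]
        norm_num
      have hc2 : cvec ξ ᵥ* (cxm B + cxm L * cxm D) = 0 := by
        rw [← cxm_mul, ← cxm_add, vecMul_cvec, h2, cvec_zero]
      exact hξ0 (cvec_eq_zero_iff.mp (hrnk (cvec ξ) hc1 hc2))
    · -- rank condition
      intro lam hlam
      by_contra hne
      rw [hrank_iff A₀ hA₀ lam] at hne
      push_neg at hne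
      obtain ⟨g, η, hgη, hgM⟩ := hne
      set ξ := g ᵥ* cxm M with hξdef
      rw [← Matrix.vecMul_vecMul, ← hξdef, vecMul_fromCols, vecMul_fromCols,
        elim_eq_elim_iff] at hgη
      obtain ⟨e1, e2⟩ := hgη
      have e1' : ξ ᵥ* (cxm A₀ * cxm Xm) - lam • (ξ ᵥ* cxm Xm) = η ᵥ* cxm (C * Xm) := by
        rw [Matrix.vecMul_sub, vecMul_smul_right] at e1
        exact e1
      have hξ0 : ξ ≠ 0 := hgM
      by_cases hcase : ∃ u₁ u₂ : Fin n → ℝ,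
          vre ξ ⬝ᵥ u₁ = 1 ∧ vim ξ ⬝ᵥ u₁ = 0 ∧ vre ξ ⬝ᵥ u₂ = 0 ∧ vim ξ ⬝ᵥ u₂ = 1
      · obtain ⟨u₁, u₂, hu11, hu12, hu21, hu22⟩ := hcase
        have hdot1 : ξ ⬝ᵥ cvec u₁ = 1 := by
          conv_lhs => rw [vec_decomp ξ]
          rw [add_dotProduct, smul_dotProduct, cvec_dotProduct, cvec_dotProduct, hu11, hu12]
          simp
        have hdot2 : ξ ⬝ᵥ cvec u₂ = Complex.I := by
          conv_lhs => rw [vec_decomp ξ]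
          rw [add_dotProduct, smul_dotProduct, cvec_dotProduct, cvec_dotProduct, hu21, hu22]
          simp
        set d : Fin n → ℂ := lam • ξ + η ᵥ* cxm C - ξ ᵥ* cxm A₀ with hd
        have hdX : d ᵥ* cxm Xm = 0 := by
          have expand : d ᵥ* cxm Xm
              = lam • (ξ ᵥ* cxm Xm) + (η ᵥ* cxm C) ᵥ* cxm Xm - (ξ ᵥ* cxm A₀) ᵥ* cxm Xm := by
            rw [hd, Matrix.sub_vecMul, Matrix.add_vecMul, Matrix.smul_vecMul]
          rw [expand, Matrix.vecMul_vecMul η (cxm C) (cxm Xm), ← cxm_mul C Xm,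
            Matrix.vecMul_vecMul ξ (cxm A₀) (cxm Xm), ← e1']
          abel
        have hdecomp : vre d ᵥ* Xm = 0 ∧ vim d ᵥ* Xm = 0 := by
          rw [vecMul_decomp] at hdX
          have h0 : (0 : Fin T → ℂ) = cvec 0 + Complex.I • cvec 0 := by
            rw [cvec_zero]; simp
          rw [h0] at hdX
          exact cvec_pair_inj hdX
        set Δ := vecMulVec u₁ (vre d) + vecMulVec u₂ (vim d) with hΔ
        set A' := A₀ + Δ with hA'
        have hA'mem : A' ∈ Adat B C D E F U X Y := by
          have hz1 : M * vecMulVec u₁ (vre d) * Xm = 0 := by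
            rw [mul_vecMulVec_left, vecMulVec_mul_right, hdecomp.1, vecMulVec_zero_right]
          have hz2 : M * vecMulVec u₂ (vim d) * Xm = 0 := by
            rw [mul_vecMulVec_left, vecMulVec_mul_right, hdecomp.2, vecMulVec_zero_right]
          rw [memA, hA', hΔ, Matrix.mul_add, Matrix.mul_add, Matrix.add_mul, Matrix.add_mul,
            hz1, hz2, add_zero, add_zero]
          exact hA₀
        have hξΔ : ξ ᵥ* cxm Δ = d := by
          rw [hΔ, cxm_add, cxm_vecMulVec, cxm_vecMulVec, Matrix.vecMul_add,
            _root_.vecMul_vecMulVec, _root_.vecMul_vecMulVec, hdot1, hdot2, one_smul]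
          exact (vec_decomp d).symm
        have hξA' : ξ ᵥ* cxm A' = lam • ξ + η ᵥ* cxm C := by
          rw [hA', cxm_add, Matrix.vecMul_add, hξΔ, hd]
          abel
        set L := -(vecMulVec u₁ (vre η) + vecMulVec u₂ (vim η)) with hL
        have hξL : ξ ᵥ* cxm L = -η := by
          rw [hL, cxm_neg, Matrix.vecMul_neg, cxm_add, Matrix.vecMul_add, cxm_vecMulVec,
            cxm_vecMulVec, _root_.vecMul_vecMulVec, _root_.vecMul_vecMulVec, hdot1, hdot2, one_smul]
          rw [← vec_decomp η]
        have hrnk := hinf A' hA'mem L lam hlam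
        rw [hautus] at hrnk
        have hc1 : ξ ᵥ* (cxm A' + cxm L * cxm C) = lam • ξ := by
          rw [Matrix.vecMul_add, hξA', ← Matrix.vecMul_vecMul, hξL, Matrix.neg_vecMul]
          abel
        have hc2 : ξ ᵥ* (cxm B + cxm L * cxm D) = 0 := by
          rw [Matrix.vecMul_add, e2, ← Matrix.vecMul_vecMul, hξL, Matrix.neg_vecMul]
          abel
        exact hξ0 (hrnk ξ hc1 hc2)
      · -- degenerate case : ξ is a complex multiple of a real vector
        have hdep : ∃ a b : ℝ, a • vre ξ + b • vim ξ = 0 ∧ ¬(a = 0 ∧ b = 0) := by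
          by_contra hno
          push_neg at hno
          exact hcase (exists_dual_pair (vre ξ) (vim ξ) (fun a b hab => hno a b hab))
        obtain ⟨a, b, hab, hab0⟩ := hdep
        obtain ⟨cc, hcc0, ζ, hζ0, hcζ⟩ : ∃ cc : ℂ, cc ≠ 0 ∧
            ∃ ζ : Fin n → ℝ, ζ ≠ 0 ∧ cc • ξ = cvec ζ := by
          by_cases hb : b = 0
          · have ha : a ≠ 0 := fun h => hab0 ⟨h, hb⟩
            have hre0 : vre ξ = 0 := by
              have h' : a • vre ξ = 0 := by
                rw [hb] at hab; simpa using hab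
              exact (smul_eq_zero.mp h').resolve_left ha
            refine ⟨-Complex.I, by simp [Complex.I_ne_zero], vim ξ, ?_, ?_⟩
            · intro h0
              apply hξ0
              rw [vec_decomp ξ, hre0, h0, cvec_zero]
              simp
            · conv_lhs => rw [vec_decomp ξ]
              rw [hre0, cvec_zero, zero_add, smul_smul]
              simp
          · have hζ0' : vre ξ ≠ 0 := by
              intro h0
              apply hξ0
              have him : vim ξ = 0 := by
                rw [h0] at hab
                simp only [smul_zero, zero_add] at hab
                exact (smul_eq_zero.mp hab).resolve_left hb
              rw [vec_decomp ξ, h0, him, cvec_zero]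
              simp
            have hcne : (1 - (a / b) * Complex.I) ≠ 0 := by
              intro h0
              have := congrArg Complex.re h0
              simp at this
            refine ⟨(1 - (a / b) * Complex.I)⁻¹, inv_ne_zero hcne, vre ξ, hζ0', ?_⟩
            have hvim : vim ξ = -(a / b) • vre ξ := by
              have h' : b • vim ξ = -(a • vre ξ) := by
                rw [← sub_eq_zero]
                rw [sub_neg_eq_add, add_comm]
                exact hab
              funext i
              have := congrFun h' i
              simp only [Pi.smul_apply, Pi.neg_apply, smul_eq_mul] at this ⊢
              field_simp at this ⊢
              linarith
            have hξform : ξ = (1 - (a / b) * Complex.I) • cvec (vre ξ) := by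
              conv_lhs => rw [vec_decomp ξ]
              rw [hvim]
              funext i
              simp only [Pi.add_apply, Pi.smul_apply, cvec, Pi.neg_apply, smul_eq_mul,
                Complex.ofReal_neg, Complex.ofReal_mul, Complex.ofReal_div]
              push_cast
              ring
            conv_lhs => rw [hξform]
            rw [smul_smul, inv_mul_cancel₀ hcne, one_smul]
        set ηc := cc • η with hηc
        have e1c : cvec ζ ᵥ* (cxm A₀ * cxm Xm) - lam • (cvec ζ ᵥ* cxm Xm)
            = ηc ᵥ* cxm (C * Xm) := by
          rw [← hcζ, hηc, Matrix.smul_vecMul cc ξ (cxm A₀ * cxm Xm),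
            Matrix.smul_vecMul cc ξ (cxm Xm), Matrix.smul_vecMul cc η (cxm (C * Xm)),
            smul_comm lam cc, ← smul_sub, e1']
        have e2c : cvec ζ ᵥ* cxm B = ηc ᵥ* cxm D := by
          rw [← hcζ, hηc, Matrix.smul_vecMul cc ξ (cxm B), Matrix.smul_vecMul cc η (cxm D), e2]
        obtain ⟨s2a, s2b⟩ : ζ ᵥ* B = vre ηc ᵥ* D ∧ (0 : Fin m → ℝ) = vim ηc ᵥ* D := by
          have h' := e2c
          rw [vecMul_cvec, vecMul_decomp ηc] at h'
          have h0 : cvec (ζ ᵥ* B) = cvec (ζ ᵥ* B) + Complex.I • cvec (0 : Fin m → ℝ) := by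
            rw [cvec_zero]; simp
          rw [h0] at h'
          exact cvec_pair_inj h'
        obtain ⟨s1a, s1b⟩ : ζ ᵥ* (A₀ * Xm) - lam.re • (ζ ᵥ* Xm) = vre ηc ᵥ* (C * Xm) ∧
            -(lam.im • (ζ ᵥ* Xm)) = vim ηc ᵥ* (C * Xm) := by
          have h' := e1c
          rw [← cxm_mul A₀ Xm, vecMul_cvec, vecMul_cvec, vecMul_decomp ηc,
            smul_cvec_decomp] at h'
          have hL' : cvec (ζ ᵥ* (A₀ * Xm))
              - (cvec (lam.re • (ζ ᵥ* Xm)) + Complex.I • cvec (lam.im • (ζ ᵥ* Xm)))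
              = cvec (ζ ᵥ* (A₀ * Xm) - lam.re • (ζ ᵥ* Xm))
                + Complex.I • cvec (-(lam.im • (ζ ᵥ* Xm))) := by
            rw [cvec_sub, cvec_neg, smul_neg]
            abel
          rw [hL'] at h'
          exact cvec_pair_inj h'
        obtain ⟨μ, s, hμS, hs⟩ : ∃ μ s : ℝ, ((μ : ℂ) ∈ S) ∧ lam.re - μ + s * lam.im = 0 := by
          by_cases him : lam.im = 0
          · refine ⟨lam.re, 0, ?_, by rw [him]; ring⟩
            have hlr : (lam.re : ℂ) = lam := by
              rw [Complex.ext_iff]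
              constructor
              · simp
              · simp [him]
            rw [hlr]; exact hlam
          · refine ⟨2, (2 - lam.re) / lam.im, ?_, by rw [div_mul_cancel₀ _ him]; ring⟩
            have : ((2 : ℝ) : ℂ) = (2 : ℂ) := by norm_num
            rw [this]; exact h2S
        set η2 := vre ηc + s • vim ηc with hη2
        have hη2D : ζ ᵥ* B = η2 ᵥ* D := by
          rw [hη2, Matrix.add_vecMul, Matrix.smul_vecMul, ← s2b, s2a]
          simp
        set dr := μ • ζ + η2 ᵥ* C - ζ ᵥ* A₀ with hdr
        have hdrX : dr ᵥ* Xm = 0 := by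
          have expand : dr ᵥ* Xm = μ • (ζ ᵥ* Xm) + (η2 ᵥ* C) ᵥ* Xm - (ζ ᵥ* A₀) ᵥ* Xm := by
            rw [hdr, Matrix.sub_vecMul, Matrix.add_vecMul, Matrix.smul_vecMul]
          rw [expand, Matrix.vecMul_vecMul η2 C Xm, Matrix.vecMul_vecMul ζ A₀ Xm,
            hη2, Matrix.add_vecMul, Matrix.smul_vecMul, ← s1a, ← s1b]
          match_scalars
          · linarith [hs]
          · ring
        have hζζ : ζ ⬝ᵥ ζ ≠ 0 := fun h => hζ0 (dotProduct_self_eq_zero.mp h)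
        set u := (ζ ⬝ᵥ ζ)⁻¹ • ζ with hu
        have hζu : ζ ⬝ᵥ u = 1 := by
          rw [hu, dotProduct_smul, smul_eq_mul, inv_mul_cancel₀ hζζ]
        set A' := A₀ + vecMulVec u dr with hA'
        have hA'mem : A' ∈ Adat B C D E F U X Y := by
          have hz1 : M * vecMulVec u dr * Xm = 0 := by
            rw [mul_vecMulVec_left, vecMulVec_mul_right, hdrX, vecMulVec_zero_right]
          rw [memA, hA', Matrix.mul_add, Matrix.add_mul, hz1, add_zero]
          exact hA₀
        set L := vecMulVec u (-η2) with hL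
        have hζL : ζ ᵥ* L = -η2 := by
          rw [hL, _root_.vecMul_vecMulVec, hζu, one_smul]
        have h1 : ζ ᵥ* (A' + L * C) = μ • ζ := by
          rw [Matrix.vecMul_add, hA', Matrix.vecMul_add, _root_.vecMul_vecMulVec, hζu, one_smul,
            ← Matrix.vecMul_vecMul ζ L C, hζL, Matrix.neg_vecMul, hdr]
          abel
        have h2 : ζ ᵥ* (B + L * D) = 0 := by
          rw [Matrix.vecMul_add, ← Matrix.vecMul_vecMul ζ L D, hζL, Matrix.neg_vecMul, hη2D]
          simp
        have hrnk := hinf A' hA'mem L (μ : ℂ) hμS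
        rw [hautus] at hrnk
        have hc1 : cvec ζ ᵥ* (cxm A' + cxm L * cxm C) = (μ : ℂ) • cvec ζ := by
          rw [← cxm_mul, ← cxm_add, vecMul_cvec, h1, cvec_smul]
        have hc2 : cvec ζ ᵥ* (cxm B + cxm L * cxm D) = 0 := by
          rw [← cxm_mul, ← cxm_add, vecMul_cvec, h2, cvec_zero]
        exact hζ0 (cvec_eq_zero_iff.mp (hrnk (cvec ζ) hc1 hc2))
  · -- the two conditions imply informativity
    rintro ⟨hker, hrank⟩ A hAmem L lam hlam
    rw [hautus A L lam]
    intro ξ hξ1 hξ2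
    set η : Fin p → ℂ := -(ξ ᵥ* cxm L) with hη
    have hξA : ξ ᵥ* cxm A = lam • ξ + η ᵥ* cxm C := by
      rw [Matrix.vecMul_add, ← Matrix.vecMul_vecMul ξ (cxm L) (cxm C)] at hξ1
      rw [hη, Matrix.neg_vecMul, ← hξ1]
      abel
    have hξB : ξ ᵥ* cxm B = η ᵥ* cxm D := by
      rw [Matrix.vecMul_add, ← Matrix.vecMul_vecMul ξ (cxm L) (cxm D)] at hξ2
      rw [hη, Matrix.neg_vecMul]
      exact eq_neg_of_add_eq_zero_left hξ2
    have hperp : ∀ x : Fin n → ℂ, cxm M *ᵥ x = 0 → ξ ⬝ᵥ x = 0 := by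
      intro x hx
      have hxsplit : M *ᵥ vre x = 0 ∧ M *ᵥ vim x = 0 := by
        rw [mulVec_decomp] at hx
        have h0 : (0 : Fin k → ℂ) = cvec 0 + Complex.I • cvec 0 := by rw [cvec_zero]; simp
        rw [h0] at hx
        exact cvec_pair_inj hx
      obtain ⟨ur, hur, hurB⟩ := hker hxsplit.1
      obtain ⟨ui, hui, huiB⟩ := hker hxsplit.2
      have hBu : cxm B *ᵥ (cvec ur + Complex.I • cvec ui) = x := by
        rw [Matrix.mulVec_add, Matrix.mulVec_smul, mulVec_cvec, mulVec_cvec]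
        have hb1 : B *ᵥ ur = vre x := hurB
        have hb2 : B *ᵥ ui = vim x := huiB
        rw [hb1, hb2, ← vec_decomp]
      have hDu : cxm D *ᵥ (cvec ur + Complex.I • cvec ui) = 0 := by
        rw [Matrix.mulVec_add, Matrix.mulVec_smul, mulVec_cvec, mulVec_cvec]
        have hd1 : D *ᵥ ur = 0 := hur
        have hd2 : D *ᵥ ui = 0 := hui
        rw [hd1, hd2, cvec_zero]
        simp
      calc ξ ⬝ᵥ x = ξ ⬝ᵥ (cxm B *ᵥ (cvec ur + Complex.I • cvec ui)) := by rw [hBu]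
        _ = (ξ ᵥ* cxm B) ⬝ᵥ (cvec ur + Complex.I • cvec ui) := dotProduct_mulVec _ _ _
        _ = (η ᵥ* cxm D) ⬝ᵥ (cvec ur + Complex.I • cvec ui) := by rw [hξB]
        _ = η ⬝ᵥ (cxm D *ᵥ (cvec ur + Complex.I • cvec ui)) := (dotProduct_mulVec _ _ _).symm
        _ = 0 := by rw [hDu, dotProduct_zero]
    obtain ⟨g, hg⟩ := exists_vecMul_eq (cxm M) ξ hperp
    have hA : M * A * Xm = R := (memA A).mp hAmem
    have hcond := (hrank_iff A hA lam).mp (hrank lam hlam)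
    have happ : g ᵥ* (cxm M * fromCols (cxm A * cxm Xm - lam • cxm Xm) (cxm B))
        = η ᵥ* fromCols (cxm (C * Xm)) (cxm D) := by
      rw [← Matrix.vecMul_vecMul g (cxm M), ← hg, vecMul_fromCols, vecMul_fromCols,
        elim_eq_elim_iff]
      constructor
      · rw [Matrix.vecMul_sub, vecMul_smul_right, ← Matrix.vecMul_vecMul ξ (cxm A) (cxm Xm),
          hξA, Matrix.add_vecMul, Matrix.smul_vecMul, Matrix.vecMul_vecMul η (cxm C) (cxm Xm),
          ← cxm_mul C Xm]
        abel
      · exact hξB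
    rw [hg]
    exact hcond g η happ

end master

/-- informativity of the data for strong controllability /
strong stabilizability. -/
theorem informative_strong_controllability_stabilizability (n m p q T k : ℕ)
    (hn : 1 ≤ n) (hm : 1 ≤ m) (hp : 1 ≤ p) (hq : 1 ≤ q) (hT : 1 ≤ T)
    (B : Matrix (Fin n) (Fin m) ℝ) (C : Matrix (Fin p) (Fin n) ℝ)
    (D : Matrix (Fin p) (Fin m) ℝ) (E : Matrix (Fin n) (Fin q) ℝ)
    (F : Matrix (Fin p) (Fin q) ℝ)
    (U : Matrix (Fin m) (Fin T) ℝ) (X : Matrix (Fin n) (Fin (T + 1)) ℝ)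
    (Y : Matrix (Fin p) (Fin T) ℝ)
    (M : Matrix (Fin k) (Fin n) ℝ) (N : Matrix (Fin k) (Fin p) ℝ)
    (hAdat : (Adat B C D E F U X Y).Nonempty)
    (hMN : LinearMap.ker (fromCols M N).mulVecLin
      = LinearMap.range (fromRows E F).mulVecLin)
    (R : Matrix (Fin k) (Fin T) ℝ)
    (hR : R = M * (Xplus X - B * U) + N * (Y - C * Xminus X - D * U)) :
    ((∀ A ∈ Adat B C D E F U X Y, ∀ L : Matrix (Fin n) (Fin p) ℝ, ∀ lam : ℂ,
        (fromCols (cx (A + L * C) - lam • 1) (cx (B + L * D))).rank = n) ↔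
      (LinearMap.ker M.mulVecLin
          ≤ Submodule.map B.mulVecLin (LinearMap.ker D.mulVecLin) ∧
        ∀ lam : ℂ,
          (fromBlocks (cx R - lam • (cx M * cx (Xminus X))) (cx M * cx B)
              (cx C * cx (Xminus X)) (cx D)).rank
            = M.rank + (fromCols (C * Xminus X) D).rank))
    ∧
    ((∀ A ∈ Adat B C D E F U X Y, ∀ L : Matrix (Fin n) (Fin p) ℝ, ∀ lam : ℂ,
        1 ≤ ‖lam‖ →
        (fromCols (cx (A + L * C) - lam • 1) (cx (B + L * D))).rank = n) ↔
      (LinearMap.ker M.mulVecLin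
          ≤ Submodule.map B.mulVecLin (LinearMap.ker D.mulVecLin) ∧
        ∀ lam : ℂ, 1 ≤ ‖lam‖ →
          (fromBlocks (cx R - lam • (cx M * cx (Xminus X))) (cx M * cx B)
              (cx C * cx (Xminus X)) (cx D)).rank
            = M.rank + (fromCols (C * Xminus X) D).rank)) := by
  constructor
  · have h := master_lemma B C D E F U X Y M N R hAdat hMN hR Set.univ (Set.mem_univ 2)
    simpa using h
  · have h2S : (2 : ℂ) ∈ {z : ℂ | 1 ≤ ‖z‖} := by
      simp only [Set.mem_setOf_eq]
      norm_num
    have h := master_lemma B C D E F U X Y M N R hAdat hMN hR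
      {z : ℂ | 1 ≤ ‖z‖} h2S
    simpa using h
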